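/- Let K₁ and K₂ be independent Kiefer processes, λ > 0, ROC: [0,1] → [0,1], and g: (0,1) → ℝ. Fix t ∈ (0,1) and define, for r_D, r_{\bar D} ∈ (0,1], W(r_D, r_{\bar D}) = (1/r_D)·[K₁(ROC(t), r_D) + λ^{1/2}·(r_D/r_{\bar D})·g(t)·K₂(t, r_{\bar D})]. Then for r_{D,1} ≤ r_{D,2} and r_{\bar D,1} ≤ r_{\bar D,2}, Cov(W(r_{D,1}, r_{\bar D,1}), W(r_{D,2}, r_{\bar D,2})) = Var(W(r_{D,2}, r_{\bar D,2})) = ROC(t)(1−ROC(t))/r_{D,2} + λ·g(t)²·t(1−t)/r_{\bar D,2}. -/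

import Mathlib

open MeasureTheory ProbabilityTheory Set

/-- A random variable is Gaussian if its law is a (possibly degenerate) real Gaussian. -/
def IsGaussianRV {Ω : Type*} [MeasurableSpace Ω] (μ : Measure Ω) (Y : Ω → ℝ) : Prop :=
  ∃ (m : ℝ) (v : NNReal), μ.map Y = gaussianReal m v

/-- A Kiefer process: a two-parameter mean-zero Gaussian process on `[0,1] × [0,∞)` with
covariance `(min t₁ t₂ − t₁t₂)·min r₁ r₂`. -/
def IsKieferProcess {Ω : Type*} [MeasurableSpace Ω] (μ : Measure Ω)
    (K : ℝ → ℝ → Ω → ℝ) : Prop :=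
  (∀ (n : ℕ) (c : Fin n → ℝ) (p : Fin n → ℝ × ℝ),
      IsGaussianRV μ (fun ω => ∑ i, c i * K (p i).1 (p i).2 ω)) ∧
  (∀ t r, t ∈ Set.Icc (0 : ℝ) 1 → 0 ≤ r → ∫ ω, K t r ω ∂μ = 0) ∧
  (∀ t₁ t₂ r₁ r₂, t₁ ∈ Set.Icc (0 : ℝ) 1 → t₂ ∈ Set.Icc (0 : ℝ) 1 → 0 ≤ r₁ → 0 ≤ r₂ →
      ∫ ω, K t₁ r₁ ω * K t₂ r₂ ω ∂μ = (min t₁ t₂ - t₁ * t₂) * min r₁ r₂)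


lemma memLp_two_id_gaussian (m : ℝ) (v : NNReal) :
    MemLp (id : ℝ → ℝ) 2 (gaussianReal m v) := by
  by_cases hv : v = 0
  · subst hv
    rw [gaussianReal_zero_var]
    refine (memLp_const m).ae_eq ?_
    rw [MeasureTheory.ae_dirac_eq]
    exact Filter.eventually_pure.mpr rfl
  · rw [gaussianReal_of_var_ne_zero _ hv]
    rw [memLp_two_iff_integrable_sq aestronglyMeasurable_id]
    rw [integrable_withDensity_iff (measurable_gaussianPDF _ _)
      (Filter.Eventually.of_forall fun x => ENNReal.ofReal_lt_top)]
    have hvpos : (0:ℝ) < (v:ℝ) := by positivity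
    set b : ℝ := (2 * (v:ℝ))⁻¹ with hb
    have hbpos : 0 < b := by positivity
    have h1 : Integrable (fun y : ℝ => (y + m) ^ 2 * Real.exp (-b * y ^ 2)) := by
      have i2 : Integrable (fun y : ℝ => y ^ 2 * Real.exp (-b * y ^ 2)) := by
        have := integrable_rpow_mul_exp_neg_mul_sq hbpos (s := 2) (by norm_num)
        simpa [Real.rpow_natCast] using this
      have i1 : Integrable (fun y : ℝ => y * Real.exp (-b * y ^ 2)) := by
        have := integrable_rpow_mul_exp_neg_mul_sq hbpos (s := 1) (by norm_num)
        simpa [Real.rpow_one] using this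
      have i0 : Integrable (fun y : ℝ => Real.exp (-b * y ^ 2)) :=
        integrable_exp_neg_mul_sq hbpos
      have := (i2.add (i1.const_mul (2 * m))).add (i0.const_mul (m ^ 2))
      refine this.congr (Filter.Eventually.of_forall fun y => ?_)
      simp only [Pi.add_apply]
      ring
    have h2 : Integrable (fun x : ℝ => x ^ 2 * Real.exp (-b * (x - m) ^ 2)) := by
      have := h1.comp_sub_right m
      refine this.congr (Filter.Eventually.of_forall fun x => ?_)
      simp
    have key : (fun x : ℝ => id x ^ 2 * (gaussianPDF m v x).toReal)
        = fun x => (Real.sqrt (2 * Real.pi * v))⁻¹ * (x ^ 2 * Real.exp (-b * (x - m) ^ 2)) := by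
      funext x
      have harg : -(x - m) ^ 2 / (2 * (v:ℝ)) = -b * (x - m) ^ 2 := by
        rw [hb]; field_simp
      rw [gaussianPDF, ENNReal.toReal_ofReal (gaussianPDFReal_nonneg m v x)]
      simp only [gaussianPDFReal, id_eq, harg]
      ring
    rw [key]
    exact h2.const_mul _

lemma IsGaussianRV.memLp_two {Ω : Type*} [MeasurableSpace Ω] {μ : Measure Ω}
    {Y : Ω → ℝ} (h : IsGaussianRV μ Y) : MemLp Y 2 μ := by
  obtain ⟨m, v, hmap⟩ := h
  have hY : AEMeasurable Y μ := by
    by_contra hc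
    rw [Measure.map_of_not_aemeasurable hc] at hmap
    exact (IsProbabilityMeasure.ne_zero (gaussianReal m v)) hmap.symm
  have hid : MemLp (id : ℝ → ℝ) 2 (μ.map Y) := hmap ▸ memLp_two_id_gaussian m v
  have := (memLp_map_measure_iff aestronglyMeasurable_id hY).mp hid
  simpa [Function.comp] using this

lemma IsKieferProcess.memLp_two {Ω : Type*} [MeasurableSpace Ω] {μ : Measure Ω}
    {K : ℝ → ℝ → Ω → ℝ} (h : IsKieferProcess μ K) (a r : ℝ) : MemLp (K a r) 2 μ := by
  have := (h.1 1 (fun _ => 1) (fun _ => (a, r))).memLp_two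
  simpa using this

lemma integrable_mul_of_memLp_two {Ω : Type*} [MeasurableSpace Ω] {μ : Measure Ω}
    {f g : Ω → ℝ} (hf : MemLp f 2 μ) (hg : MemLp g 2 μ) :
    Integrable (fun ω => f ω * g ω) μ := by
  have h : (1 : ENNReal) / 1 = 1 / 2 + 1 / 2 := by
    rw [ENNReal.add_halves]; simp
  haveI : ENNReal.HolderTriple 2 2 1 := ⟨by simpa [one_div] using h.symm⟩
  have := memLp_one_iff_integrable.mp (hf.smul (r := 1) hg)
  simpa [mul_comm, Pi.mul_def] using this

/-- For independent Kiefer processes `K₁, K₂`, `λ > 0`, `ROC : [0,1] → [0,1]`, `g` and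
fixed `t ∈ (0,1)`, the limiting process
`W(r_D, r_D̄) = (1/r_D)·[K₁(ROC(t), r_D) + √λ·(r_D/r_D̄)·g(t)·K₂(t, r_D̄)]` satisfies, for
`r_{D,1} ≤ r_{D,2}` and `r_{D̄,1} ≤ r_{D̄,2}`,
`Cov(W(r_{D,1},r_{D̄,1}), W(r_{D,2},r_{D̄,2})) = Var(W(r_{D,2},r_{D̄,2}))
  = ROC(t)(1−ROC(t))/r_{D,2} + λ·g(t)²·t(1−t)/r_{D̄,2}`. -/
theorem seq_roc_limit_independent_increments
    {Ω : Type*} [MeasurableSpace Ω] (μ : Measure Ω) [IsProbabilityMeasure μ]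
    (K₁ K₂ : ℝ → ℝ → Ω → ℝ)
    (hK₁ : IsKieferProcess μ K₁) (hK₂ : IsKieferProcess μ K₂)
    (hIndep : IndepFun (fun ω => fun p : ℝ × ℝ => K₁ p.1 p.2 ω)
      (fun ω => fun p : ℝ × ℝ => K₂ p.1 p.2 ω) μ)
    (lam : ℝ) (hlam : 0 < lam)
    (ROC : ℝ → ℝ) (hROC : ∀ s ∈ Set.Icc (0 : ℝ) 1, ROC s ∈ Set.Icc (0 : ℝ) 1)
    (g : ℝ → ℝ) (t : ℝ) (ht : t ∈ Set.Ioo (0 : ℝ) 1)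
    (W : ℝ → ℝ → Ω → ℝ)
    (hW : ∀ rD rDb ω, W rD rDb ω
      = (1 / rD) * (K₁ (ROC t) rD ω + Real.sqrt lam * (rD / rDb) * g t * K₂ t rDb ω))
    (rD₁ rD₂ rDb₁ rDb₂ : ℝ)
    (hrD₁ : rD₁ ∈ Set.Ioc (0 : ℝ) 1) (hrD₂ : rD₂ ∈ Set.Ioc (0 : ℝ) 1)
    (hrDb₁ : rDb₁ ∈ Set.Ioc (0 : ℝ) 1) (hrDb₂ : rDb₂ ∈ Set.Ioc (0 : ℝ) 1)
    (hrD : rD₁ ≤ rD₂) (hrDb : rDb₁ ≤ rDb₂) :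
    (∫ ω, W rD₁ rDb₁ ω * W rD₂ rDb₂ ω ∂μ = ∫ ω, W rD₂ rDb₂ ω * W rD₂ rDb₂ ω ∂μ) ∧
    (∫ ω, W rD₂ rDb₂ ω * W rD₂ rDb₂ ω ∂μ
      = ROC t * (1 - ROC t) / rD₂ + lam * (g t) ^ 2 * (t * (1 - t)) / rDb₂) := by
  obtain ⟨ht0, ht1⟩ := ht
  have htIcc : t ∈ Set.Icc (0:ℝ) 1 := ⟨ht0.le, ht1.le⟩
  have hρ : ROC t ∈ Set.Icc (0:ℝ) 1 := hROC t htIcc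
  have key : ∀ r1 r2 rb1 rb2 : ℝ, r1 ∈ Set.Ioc (0:ℝ) 1 → r2 ∈ Set.Ioc (0:ℝ) 1 →
      rb1 ∈ Set.Ioc (0:ℝ) 1 → rb2 ∈ Set.Ioc (0:ℝ) 1 → r1 ≤ r2 → rb1 ≤ rb2 →
      ∫ ω, W r1 rb1 ω * W r2 rb2 ω ∂μ
        = ROC t * (1 - ROC t) / r2 + lam * (g t) ^ 2 * (t * (1 - t)) / rb2 := by
    intro r1 r2 rb1 rb2 h1 h2 hb1 hb2 hle hble
    have h10 : r1 ≠ 0 := ne_of_gt h1.1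
    have h20 : r2 ≠ 0 := ne_of_gt h2.1
    have hb10 : rb1 ≠ 0 := ne_of_gt hb1.1
    have hb20 : rb2 ≠ 0 := ne_of_gt hb2.1
    have hprod : ∀ ω, W r1 rb1 ω * W r2 rb2 ω =
        (1/(r1*r2)) * (K₁ (ROC t) r1 ω * K₁ (ROC t) r2 ω)
        + (Real.sqrt lam * g t/(r1*rb2)) * (K₁ (ROC t) r1 ω * K₂ t rb2 ω)
        + (Real.sqrt lam * g t/(rb1*r2)) * (K₂ t rb1 ω * K₁ (ROC t) r2 ω)
        + (Real.sqrt lam * Real.sqrt lam * (g t)^2/(rb1*rb2))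
            * (K₂ t rb1 ω * K₂ t rb2 ω) := by
      intro ω
      rw [hW, hW]
      generalize Real.sqrt lam = sq
      field_simp
      ring
    have i11 : Integrable (fun ω => K₁ (ROC t) r1 ω * K₁ (ROC t) r2 ω) μ :=
      integrable_mul_of_memLp_two (hK₁.memLp_two _ _) (hK₁.memLp_two _ _)
    have i12 : Integrable (fun ω => K₁ (ROC t) r1 ω * K₂ t rb2 ω) μ :=
      integrable_mul_of_memLp_two (hK₁.memLp_two _ _) (hK₂.memLp_two _ _)
    have i21 : Integrable (fun ω => K₂ t rb1 ω * K₁ (ROC t) r2 ω) μ :=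
      integrable_mul_of_memLp_two (hK₂.memLp_two _ _) (hK₁.memLp_two _ _)
    have i22 : Integrable (fun ω => K₂ t rb1 ω * K₂ t rb2 ω) μ :=
      integrable_mul_of_memLp_two (hK₂.memLp_two _ _) (hK₂.memLp_two _ _)
    have hind : ∀ p q : ℝ × ℝ,
        IndepFun (fun ω => K₁ p.1 p.2 ω) (fun ω => K₂ q.1 q.2 ω) μ := by
      intro p q
      have := hIndep.comp (measurable_pi_apply p) (measurable_pi_apply q)
      simpa [Function.comp_def] using this
    have e11 : ∫ ω, K₁ (ROC t) r1 ω * K₁ (ROC t) r2 ω ∂μ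
        = (ROC t - ROC t * ROC t) * r1 := by
      rw [hK₁.2.2 (ROC t) (ROC t) r1 r2 hρ hρ h1.1.le h2.1.le, min_self, min_eq_left hle]
    have e22 : ∫ ω, K₂ t rb1 ω * K₂ t rb2 ω ∂μ = (t - t * t) * rb1 := by
      rw [hK₂.2.2 t t rb1 rb2 htIcc htIcc hb1.1.le hb2.1.le, min_self, min_eq_left hble]
    have e12 : ∫ ω, K₁ (ROC t) r1 ω * K₂ t rb2 ω ∂μ = 0 := by
      rw [(hind (ROC t, r1) (t, rb2)).integral_fun_mul_eq_mul_integral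
        (hK₁.memLp_two _ _).aestronglyMeasurable (hK₂.memLp_two _ _).aestronglyMeasurable]
      rw [hK₁.2.1 (ROC t) r1 hρ h1.1.le, zero_mul]
    have e21 : ∫ ω, K₂ t rb1 ω * K₁ (ROC t) r2 ω ∂μ = 0 := by
      rw [((hind (ROC t, r2) (t, rb1)).symm).integral_fun_mul_eq_mul_integral
        (hK₂.memLp_two _ _).aestronglyMeasurable (hK₁.memLp_two _ _).aestronglyMeasurable]
      rw [hK₂.2.1 t rb1 htIcc hb1.1.le, zero_mul]
    have j12 : Integrable (fun ω => 1/(r1*r2) * (K₁ (ROC t) r1 ω * K₁ (ROC t) r2 ω)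
        + Real.sqrt lam * g t/(r1*rb2) * (K₁ (ROC t) r1 ω * K₂ t rb2 ω)) μ :=
      (i11.const_mul _).add (i12.const_mul _)
    have j123 : Integrable (fun ω => 1/(r1*r2) * (K₁ (ROC t) r1 ω * K₁ (ROC t) r2 ω)
        + Real.sqrt lam * g t/(r1*rb2) * (K₁ (ROC t) r1 ω * K₂ t rb2 ω)
        + Real.sqrt lam * g t/(rb1*r2) * (K₂ t rb1 ω * K₁ (ROC t) r2 ω)) μ :=
      j12.add (i21.const_mul _)
    rw [integral_congr_ae (Filter.Eventually.of_forall hprod)]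
    rw [integral_add j123 (i22.const_mul _), integral_add j12 (i21.const_mul _),
      integral_add (i11.const_mul _) (i12.const_mul _),
      integral_const_mul, integral_const_mul, integral_const_mul, integral_const_mul,
      e11, e12, e21, e22, mul_zero, mul_zero, add_zero, add_zero,
      Real.mul_self_sqrt hlam.le]
    field_simp
  exact ⟨(key rD₁ rD₂ rDb₁ rDb₂ hrD₁ hrD₂ hrDb₁ hrDb₂ hrD hrDb).trans
      (key rD₂ rD₂ rDb₂ rDb₂ hrD₂ hrD₂ hrDb₂ hrDb₂ le_rfl le_rfl).symm,
    key rD₂ rD₂ rDb₂ rDb₂ hrD₂ hrD₂ hrDb₂ hrDb₂ le_rfl le_rfl⟩
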